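/- Let {Δ(ζ_ν; R_ν)}_{ν≥0} be a locally finite sequence of pairwise disjoint open disks in ℂ. Then there exists a sequence of radii r_ν ∈ (0, R_ν) for ν ≥ 1 such that Σ_{ν=1}^∞ [log(R₀⁻¹ R_ν⁻¹ (|ζ_ν − ζ₀| + R₀)(|ζ_ν − ζ₀| + R_ν))] / [log(R₀⁻¹ r_ν⁻¹ (|ζ_ν − ζ₀| + R₀)(|ζ_ν − ζ₀| − r_ν))] < 1. -/

import Mathlib

open Complex Metric

private lemma key_choice (R0 Rn d c : ℝ) (hR0 : 0 < R0) (hRn : 0 < Rn)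
    (hd : Rn + R0 ≤ d) :
    ∃ r : ℝ, 0 < r ∧ r < Rn ∧ c ≤ Real.log (R0⁻¹ * r⁻¹ * (d + R0) * (d - r)) := by
  have hd0 : 0 < d := lt_of_lt_of_le (by linarith) hd
  set e : ℝ := max (Real.exp c) 1 with he
  have he1 : 1 ≤ e := le_max_right _ _
  have he0 : 0 < e := lt_of_lt_of_le one_pos he1
  refine ⟨min (Rn / 2) (d / (2 * e)), ?_, ?_, ?_⟩
  · exact lt_min (by linarith) (by positivity)
  · exact lt_of_le_of_lt (min_le_left _ _) (by linarith)
  set r := min (Rn / 2) (d / (2 * e)) with hr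
  have hrpos : 0 < r := lt_min (by linarith) (by positivity)
  have hrle : r ≤ d / (2 * e) := min_le_right _ _
  have hdr : d / 2 ≤ d - r := by
    have : d / (2 * e) ≤ d / 2 := by
      apply div_le_div_of_nonneg_left hd0.le (by norm_num) (by linarith)
    nlinarith
  have hB : Real.exp c ≤ R0⁻¹ * r⁻¹ * (d + R0) * (d - r) := by
    have h1 : 1 ≤ R0⁻¹ * (d + R0) := by
      rw [← div_eq_inv_mul, le_div_iff₀ hR0]; linarith
    have h2 : e ≤ r⁻¹ * (d - r) := by
      have hrinv : (2 * e) / d ≤ r⁻¹ := by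
        have h := (inv_le_inv₀ (by positivity) hrpos).mpr hrle
        rwa [inv_div] at h
      calc e = (2 * e) / d * (d / 2) := by field_simp
      _ ≤ r⁻¹ * (d - r) := by
        apply mul_le_mul hrinv hdr (by linarith) (by positivity)
    calc Real.exp c ≤ e := le_max_left _ _
    _ = 1 * e := (one_mul e).symm
    _ ≤ (R0⁻¹ * (d + R0)) * (r⁻¹ * (d - r)) := by
      apply mul_le_mul h1 h2 he0.le (by positivity)
    _ = R0⁻¹ * r⁻¹ * (d + R0) * (d - r) := by ring
  calc c = Real.log (Real.exp c) := (Real.log_exp c).symm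
  _ ≤ _ := Real.log_le_log (Real.exp_pos c) hB

/-- Given a locally finite sequence of pairwise disjoint open disks
`Δ(ζ_ν; R_ν)` in `ℂ`, there exist radii `r_ν ∈ (0, R_ν)` (for `ν ≥ 1`) such that the
series of ratios of logarithms is (summable and) less than `1`. -/
theorem stmt_13 (ζ : ℕ → ℂ) (R : ℕ → ℝ) (hR : ∀ ν, 0 < R ν)
    (hdisj : ∀ μ ν : ℕ, μ ≠ ν → Disjoint (ball (ζ μ) (R μ)) (ball (ζ ν) (R ν)))
    (hlocfin : ∀ K : Set ℂ, IsCompact K → {ν : ℕ | (ball (ζ ν) (R ν) ∩ K).Nonempty}.Finite) :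
    ∃ r : ℕ → ℝ, (∀ ν : ℕ, 1 ≤ ν → 0 < r ν ∧ r ν < R ν) ∧
      Summable (fun ν : ℕ =>
        Real.log ((R 0)⁻¹ * (R (ν + 1))⁻¹ * (‖ζ (ν + 1) - ζ 0‖ + R 0) *
            (‖ζ (ν + 1) - ζ 0‖ + R (ν + 1))) /
          Real.log ((R 0)⁻¹ * (r (ν + 1))⁻¹ * (‖ζ (ν + 1) - ζ 0‖ + R 0) *
            (‖ζ (ν + 1) - ζ 0‖ - r (ν + 1)))) ∧
      (∑' ν : ℕ,
        Real.log ((R 0)⁻¹ * (R (ν + 1))⁻¹ * (‖ζ (ν + 1) - ζ 0‖ + R 0) *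
            (‖ζ (ν + 1) - ζ 0‖ + R (ν + 1))) /
          Real.log ((R 0)⁻¹ * (r (ν + 1))⁻¹ * (‖ζ (ν + 1) - ζ 0‖ + R 0) *
            (‖ζ (ν + 1) - ζ 0‖ - r (ν + 1)))) < 1 := by
  -- distance between centers
  set d : ℕ → ℝ := fun n => ‖ζ (n + 1) - ζ 0‖ with hdd
  have hdist : ∀ n : ℕ, R (n + 1) + R 0 ≤ d n := by
    intro n
    have h := hdisj (n + 1) 0 (Nat.succ_ne_zero n)
    have := (disjoint_ball_ball_iff (hR (n+1)) (hR 0)).mp h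
    simpa [hdd, dist_eq, Complex.dist_eq] using this
  -- numerator logs are positive
  set A : ℕ → ℝ := fun n =>
    (R 0)⁻¹ * (R (n + 1))⁻¹ * (d n + R 0) * (d n + R (n + 1)) with hA
  have hd0 : ∀ n, 0 < d n := fun n =>
    lt_of_lt_of_le (by have := hR (n+1); have := hR 0; linarith) (hdist n)
  have hA1 : ∀ n, 1 < A n := by
    intro n
    have h1 : 1 < (R 0)⁻¹ * (d n + R 0) := by
      rw [← div_eq_inv_mul, lt_div_iff₀ (hR 0)]
      have := hd0 n; linarith
    have h2 : 1 < (R (n+1))⁻¹ * (d n + R (n + 1)) := by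
      rw [← div_eq_inv_mul, lt_div_iff₀ (hR (n+1))]
      have := hd0 n; linarith
    calc (1:ℝ) = 1 * 1 := by norm_num
    _ < ((R 0)⁻¹ * (d n + R 0)) * ((R (n+1))⁻¹ * (d n + R (n + 1))) :=
      mul_lt_mul'' h1 h2 zero_le_one zero_le_one
    _ = A n := by rw [hA]; ring
  have hlogA : ∀ n, 0 < Real.log (A n) := fun n => Real.log_pos (hA1 n)
  -- choose radii
  have hex : ∀ n : ℕ, ∃ r : ℝ, 0 < r ∧ r < R (n + 1) ∧
      2 ^ (n + 2) * Real.log (A n) ≤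
        Real.log ((R 0)⁻¹ * r⁻¹ * (d n + R 0) * (d n - r)) :=
    fun n => key_choice (R 0) (R (n+1)) (d n) _ (hR 0) (hR (n+1)) (hdist n)
  choose f hf1 hf2 hf3 using hex
  refine ⟨fun ν => Nat.casesOn ν 1 f, ?_, ?_⟩
  · intro ν hν
    cases ν with
    | zero => omega
    | succ n => exact ⟨hf1 n, hf2 n⟩
  have hlogB : ∀ n : ℕ, 0 < Real.log ((R 0)⁻¹ * (f n)⁻¹ * (d n + R 0) * (d n - f n)) := by
    intro n
    exact lt_of_lt_of_le (mul_pos (by positivity) (hlogA n)) (hf3 n)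
  have hbound : ∀ n : ℕ,
      Real.log (A n) / Real.log ((R 0)⁻¹ * (f n)⁻¹ * (d n + R 0) * (d n - f n))
        ≤ (1/2 : ℝ) ^ (n + 2) := by
    intro n
    rw [div_le_iff₀ (hlogB n)]
    calc Real.log (A n) = (1/2:ℝ)^(n+2) * (2^(n+2) * Real.log (A n)) := by
          rw [one_div, inv_pow, inv_mul_cancel_left₀ (pow_ne_zero _ two_ne_zero)]
    _ ≤ (1/2:ℝ)^(n+2) * Real.log ((R 0)⁻¹ * (f n)⁻¹ * (d n + R 0) * (d n - f n)) := by
          apply mul_le_mul_of_nonneg_left (hf3 n) (by positivity)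
  have hnonneg : ∀ n : ℕ,
      0 ≤ Real.log (A n) / Real.log ((R 0)⁻¹ * (f n)⁻¹ * (d n + R 0) * (d n - f n)) :=
    fun n => div_nonneg (hlogA n).le (hlogB n).le
  have heq : (fun n : ℕ => (1/2:ℝ)^(n+2)) = fun n : ℕ => (1/2:ℝ)^n * (1/2)^2 := by
    funext n; rw [pow_add]
  have hgsum : Summable (fun n : ℕ => (1/2:ℝ) ^ (n + 2)) := by
    rw [heq]
    exact (summable_geometric_of_lt_one (by norm_num) (by norm_num)).mul_right _
  have hsummable : Summable (fun n : ℕ =>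
      Real.log (A n) / Real.log ((R 0)⁻¹ * (f n)⁻¹ * (d n + R 0) * (d n - f n))) :=
    Summable.of_nonneg_of_le hnonneg hbound hgsum
  constructor
  · exact hsummable
  · have htsum : (∑' n : ℕ, ((1/2:ℝ) ^ (n + 2))) = 1/2 := by
      rw [heq, tsum_mul_right, tsum_geometric_of_lt_one (by norm_num) (by norm_num)]
      norm_num
    calc (∑' n : ℕ,
        Real.log (A n) / Real.log ((R 0)⁻¹ * (f n)⁻¹ * (d n + R 0) * (d n - f n)))
        ≤ ∑' n : ℕ, (1/2:ℝ)^(n+2) := Summable.tsum_le_tsum hbound hsummable hgsum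
    _ = 1/2 := htsum
    _ < 1 := by norm_num
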